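/- arXiv:1502.03965 — 2 statements merged into one kernel-verified Lean document; each statement's English description precedes it below -/
import Mathlib

section
/- Let η ≥ 1, let (G, k) be an instance of Treedepth-η Deletion, and let ℓ be a non-negative integer. Let X ⊆ V(G) and let {u, v} be a pair of distinct non-adjacent vertices of G. If (1) the graph G[X ∪ {u, v}] contains at least ℓ + η pairwise internally vertex-disjoint paths between u and v, and (2) G has a minimum-size treedepth-η modulator containing at most ℓ vertices of X, then G has a treedepth-η modulator of size at most k if and only if G + {u, v} (the graph obtained from G by adding the edge {u, v}) has a treedepth-η modulator of size at most k. -/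
/-- A rooted forest on the vertex type `V`, given by a parent function.
Acyclicity guarantees that following parents never returns to a vertex. -/
structure RootedForest (V : Type*) where
  parent : V → Option V
  acyclic : ∀ v : V, ¬ Relation.TransGen (fun a b => parent a = some b) v v

namespace RootedForest

variable {V : Type*} (F : RootedForest V)

/-- `F.Anc x y` means that `y` is an ancestor of `x` in the rooted forest `F`
(every vertex is an ancestor of itself). -/
def Anc (x y : V) : Prop :=
  Relation.ReflTransGen (fun a b => F.parent a = some b) x y

/-- `F.ProperAnc x y` means that `y` is a proper ancestor of `x`. -/
def ProperAnc (x y : V) : Prop :=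
  Relation.TransGen (fun a b => F.parent a = some b) x y

/-- `x` and `y` are in ancestor–descendant relation in `F`. -/
def AncDesc (x y : V) : Prop := F.Anc x y ∨ F.Anc y x

/-- The depth of `v` in `F`: the number of vertices on the path from `v`
to the root of its tree (including both endpoints). -/
noncomputable def depth (v : V) : ℕ := Nat.card {u : V // F.Anc v u}

/-- The height of the forest: the maximum depth of a vertex. -/
noncomputable def height : ℕ := sSup (Set.range F.depth)

/-- The reach of `v` in `F`. -/
noncomputable def reach (v : V) : ℕ := F.height - F.depth v

/-- The vertex set of the subtree of `F` rooted at `v` (all descendants of `v`,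
including `v` itself). -/
def subtree (v : V) : Set V := {u : V | F.Anc u v}

/-- `x` and `y` lie in the same tree of the forest, i.e. they have a common ancestor. -/
def SameTree (x y : V) : Prop := ∃ w : V, F.Anc x w ∧ F.Anc y w

end RootedForest

/-- `F` is a treedepth decomposition of `G`: a rooted forest on the vertex set of `G`
such that the endpoints of every edge are in ancestor–descendant relation. -/
def SimpleGraph.IsTreedepthDecomp {V : Type*} (G : SimpleGraph V) (F : RootedForest V) : Prop :=
  ∀ ⦃u v : V⦄, G.Adj u v → F.AncDesc u v

/-- The treedepth of `G`: the minimum height of a treedepth decomposition of `G`. -/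
noncomputable def SimpleGraph.treedepth {V : Type*} (G : SimpleGraph V) : ℕ :=
  sInf {n : ℕ | ∃ F : RootedForest V, G.IsTreedepthDecomp F ∧ F.height = n}

/-- The open neighborhood of a vertex set `S`: all vertices outside `S`
with a neighbor in `S`. -/
def SimpleGraph.nbhdSet {V : Type*} (G : SimpleGraph V) (S : Set V) : Set V :=
  {u : V | u ∉ S ∧ ∃ s ∈ S, G.Adj u s}

/-- `Z` is a treedepth-`η` modulator of `G`: removing `Z` leaves a graph of
treedepth at most `η`. -/
def SimpleGraph.IsTdMod {V : Type*} (G : SimpleGraph V) (η : ℕ) (Z : Set V) : Prop :=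
  (G.induce Zᶜ).treedepth ≤ η

/-- `G` contains `m` pairwise internally vertex-disjoint paths between `u` and `v`. -/
def IntDisjointPaths {V : Type*} (G : SimpleGraph V) (u v : V) (m : ℕ) : Prop :=
  ∃ P : Fin m → G.Walk u v, (∀ i, (P i).IsPath) ∧
    ∀ i j, i ≠ j → ∀ w, w ∈ (P i).support → w ∈ (P j).support → w = u ∨ w = v

/-- A treedepth decomposition is nice if every subtree induces a connected subgraph. -/
def IsNiceDecomp {V : Type*} (G : SimpleGraph V) (F : RootedForest V) : Prop :=
  ∀ v : V, (G.induce (F.subtree v)).Connected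

/-! ### Auxiliary lemmas -/

namespace RootedForest

variable {W : Type*} {F : RootedForest W}

lemma anc_refl (a : W) : F.Anc a a := Relation.ReflTransGen.refl

lemma anc_trans {a b c : W} (h1 : F.Anc a b) (h2 : F.Anc b c) : F.Anc a c :=
  Relation.ReflTransGen.trans h1 h2

lemma anc_comparable {v a b : W} (ha : F.Anc v a) (hb : F.Anc v b) :
    F.Anc a b ∨ F.Anc b a := by
  induction ha using Relation.ReflTransGen.head_induction_on with
  | refl => exact Or.inl hb
  | head hstep htail ih =>
    rename_i x c
    rcases Relation.ReflTransGen.cases_head hb with rfl | ⟨c', hstep', htail'⟩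
    · exact Or.inr (Relation.ReflTransGen.head hstep htail)
    · have : c = c' := by rw [hstep] at hstep'; exact Option.some.inj hstep'
      subst this
      exact ih htail'

lemma anc_antisymm {a b : W} (h1 : F.Anc a b) (h2 : F.Anc b a) : a = b := by
  by_contra hne
  rcases Relation.reflTransGen_iff_eq_or_transGen.mp h1 with rfl | ht
  · exact hne rfl
  · exact F.acyclic a (Relation.TransGen.trans_left ht h2)

variable [Finite W]

lemma depth_lt_of_anc {a b : W} (h : F.Anc a b) (hne : a ≠ b) : F.depth b < F.depth a := by
  have key : F.depth a = Set.ncard {u | F.Anc a u} := Nat.card_coe_set_eq _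
  have key' : F.depth b = Set.ncard {u | F.Anc b u} := Nat.card_coe_set_eq _
  rw [key, key']
  apply Set.ncard_lt_ncard _ (Set.toFinite _)
  constructor
  · intro x hx; exact anc_trans h hx
  · intro hsub
    exact hne (anc_antisymm h (hsub (anc_refl a)))

lemma depth_le_height (v : W) : F.depth v ≤ F.height :=
  le_csSup (Set.Finite.bddAbove (Set.finite_range _)) ⟨v, rfl⟩

lemma anc_of_depth_le {v a b : W} (ha : F.Anc v a) (hb : F.Anc v b)
    (hd : F.depth a ≤ F.depth b) : F.Anc b a := by
  rcases anc_comparable ha hb with h | h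
  · rcases eq_or_ne a b with rfl | hne
    · exact anc_refl a
    · exact absurd (depth_lt_of_anc h hne) (by omega)
  · exact h

end RootedForest

section WalkAnc

open RootedForest

variable {W : Type*} [Finite W] {H : SimpleGraph W} {F : RootedForest W}

lemma walk_anc (hF : H.IsTreedepthDecomp F) {w : W} :
    ∀ {a b : W} (p : H.Walk a b), (∀ x ∈ p.support, F.depth w ≤ F.depth x) →
      F.Anc a w → ∀ x ∈ p.support, F.Anc x w := by
  intro a b p
  induction p with
  | nil =>
    intro _ ha x hx
    simp only [SimpleGraph.Walk.support_nil, List.mem_singleton] at hx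
    subst hx; exact ha
  | cons hadj q ih =>
    intro hmin ha x hx
    rename_i a' c' b'
    have hc : F.Anc c' w := by
      rcases hF hadj with h | h
      · exact anc_of_depth_le ha h (hmin c' (by simp))
      · exact anc_trans h ha
    simp only [SimpleGraph.Walk.support_cons, List.mem_cons] at hx
    rcases hx with rfl | hx
    · exact ha
    · exact ih (fun y hy => hmin y (by simp [hy])) hc x hx

lemma exists_common_anc (hF : H.IsTreedepthDecomp F) {a b : W} (p : H.Walk a b) :
    ∃ w ∈ p.support, F.Anc a w ∧ F.Anc b w := by
  classical
  obtain ⟨w, hw, hwmin⟩ := p.support.toFinset.exists_min_image F.depth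
    (by simp [SimpleGraph.Walk.support_ne_nil, List.toFinset_eq_empty_iff,
      Finset.nonempty_iff_ne_empty])
  rw [List.mem_toFinset] at hw
  refine ⟨w, hw, ?_, ?_⟩
  · exact walk_anc hF (p.takeUntil w hw).reverse
      (fun x hx => hwmin x (by
        rw [List.mem_toFinset]
        exact p.support_takeUntil_subset hw (by simpa using hx)))
      (anc_refl w) a (by simp)
  · exact walk_anc hF (p.dropUntil w hw)
      (fun x hx => hwmin x (by
        rw [List.mem_toFinset]
        exact p.support_dropUntil_subset hw hx))
      (anc_refl w) b (by simp)

/-- Key lemma: η internally disjoint walks between non-ancestor-related vertices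
force large depth. -/
lemma ancDesc_of_walks (hF : H.IsTreedepthDecomp F) {η : ℕ} (hh : F.height ≤ η)
    {u v : W} (huv : u ≠ v) (P : Fin η → H.Walk u v)
    (hdisj : ∀ i j, i ≠ j → ∀ w, w ∈ (P i).support → w ∈ (P j).support → w = u ∨ w = v) :
    F.AncDesc u v := by
  by_contra hnad
  choose wf hmem hancu hancv using fun i => exists_common_anc hF (P i)
  have hwu : ∀ i, wf i ≠ u := fun i h => hnad (Or.inr (h ▸ hancv i))
  have hwv : ∀ i, wf i ≠ v := fun i h => hnad (Or.inl (h ▸ hancu i))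
  have hwinj : Function.Injective wf := by
    intro i j hij
    by_contra hne
    rcases hdisj i j hne (wf i) (hmem i) (hij ▸ hmem j) with h | h
    exacts [hwu i h, hwv i h]
  have hcard : η + 1 ≤ F.depth u := by
    have hinj : Function.Injective (fun o : Option (Fin η) =>
        (Option.elim o ⟨u, RootedForest.anc_refl u⟩
          (fun i => ⟨wf i, hancu i⟩) : {x // F.Anc u x})) := by
      intro o1 o2 h12
      match o1, o2 with
      | none, none => rfl
      | some i, some j =>
        simp only [Option.elim, Subtype.mk.injEq] at h12
        exact congrArg some (hwinj h12)
      | none, some i =>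
        simp only [Option.elim, Subtype.mk.injEq] at h12
        exact absurd h12.symm (hwu i)
      | some i, none =>
        simp only [Option.elim, Subtype.mk.injEq] at h12
        exact absurd h12 (hwu i)
    have := Nat.card_le_card_of_injective _ hinj
    simpa [RootedForest.depth] using this
  have := RootedForest.depth_le_height (F := F) u
  omega

end WalkAnc

section Treedepth

variable {W : Type*} [Finite W]

lemma exists_decomp (H : SimpleGraph W) : ∃ F : RootedForest W, H.IsTreedepthDecomp F := by
  classical
  have : Fintype W := Fintype.ofFinite W
  set n := Fintype.card W with hn
  let e : W ≃ Fin n := Fintype.equivFin W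
  let par : W → Option W := fun w =>
    if h : (e w).val + 1 < n then some (e.symm ⟨(e w).val + 1, h⟩) else none
  have hstep : ∀ a b : W, par a = some b → (e a).val + 1 = (e b).val := by
    intro a b hab
    by_cases h : (e a).val + 1 < n
    · simp only [par, dif_pos h] at hab
      rw [← Option.some.inj hab]; simp
    · simp [par, dif_neg h] at hab
  have hacyc : ∀ v : W, ¬ Relation.TransGen (fun a b => par a = some b) v v := by
    intro v hv
    have mono : ∀ a b : W, Relation.TransGen (fun a b => par a = some b) a b →
        (e a).val < (e b).val := by
      intro a b hab
      induction hab with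
      | single h => have := hstep _ _ h; omega
      | tail h1 h2 ih => exact lt_trans ih (by have := hstep _ _ h2; omega)
    exact absurd (mono v v hv) (lt_irrefl _)
  refine ⟨⟨par, hacyc⟩, ?_⟩
  set F : RootedForest W := ⟨par, hacyc⟩ with hF
  have anc_of_le : ∀ (k : ℕ) (a b : W), (e b).val = (e a).val + k → F.Anc a b := by
    intro k
    induction k with
    | zero =>
      intro a b hab
      have : a = b := e.injective (Fin.ext (by omega))
      subst this; exact Relation.ReflTransGen.refl
    | succ k ih =>
      intro a b hab
      have hlt : (e a).val + 1 < n := by have := (e b).isLt; omega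
      set c := e.symm ⟨(e a).val + 1, hlt⟩ with hc
      have hpc : par a = some c := by simp [par, dif_pos hlt, hc]
      have hec : (e c).val = (e a).val + 1 := by simp [hc]
      exact Relation.ReflTransGen.head hpc (ih c b (by omega))
  intro a b hab
  rcases le_total (e a).val (e b).val with h | h
  · exact Or.inl (anc_of_le ((e b).val - (e a).val) a b (by omega))
  · exact Or.inr (anc_of_le ((e a).val - (e b).val) b a (by omega))

lemma exists_decomp_treedepth (H : SimpleGraph W) :
    ∃ F : RootedForest W, H.IsTreedepthDecomp F ∧ F.height = H.treedepth := by
  have hne : {n : ℕ | ∃ F : RootedForest W, H.IsTreedepthDecomp F ∧ F.height = n}.Nonempty := by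
    obtain ⟨F, hF⟩ := exists_decomp H
    exact ⟨F.height, F, hF, rfl⟩
  exact Nat.sInf_mem hne

lemma treedepth_le_of_decomp {H : SimpleGraph W} {F : RootedForest W}
    (hF : H.IsTreedepthDecomp F) : H.treedepth ≤ F.height :=
  Nat.sInf_le ⟨F, hF, rfl⟩

lemma treedepth_mono {H H' : SimpleGraph W} (h : H ≤ H') :
    H.treedepth ≤ H'.treedepth := by
  obtain ⟨F, hF, hFh⟩ := exists_decomp_treedepth H'
  exact hFh ▸ treedepth_le_of_decomp (fun a b hab => hF (h hab))

end Treedepth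

section Lift

variable {V : Type*} (G : SimpleGraph V) (S T : Set V)

/-- Lift a walk in `G.induce S` to `G.induce T` when its support lies in `T`. -/
def liftWalk : ∀ {a b : ↥S}, (p : (G.induce S).Walk a b) → (ha : (a : V) ∈ T) →
    (hb : (b : V) ∈ T) → (∀ x ∈ p.support, (x : V) ∈ T) →
    (G.induce T).Walk ⟨a, ha⟩ ⟨b, hb⟩
  | _, _, SimpleGraph.Walk.nil, _, _, _ => SimpleGraph.Walk.nil
  | _, _, SimpleGraph.Walk.cons hadj q, ha, hb, h =>
      SimpleGraph.Walk.cons (by exact hadj)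
        (liftWalk q (h _ (by simp)) hb (fun x hx => h x (by simp [hx])))

lemma liftWalk_support : ∀ {a b : ↥S} (p : (G.induce S).Walk a b) (ha : (a : V) ∈ T)
    (hb : (b : V) ∈ T) (h : ∀ x ∈ p.support, (x : V) ∈ T),
    (liftWalk G S T p ha hb h).support.map Subtype.val = p.support.map Subtype.val := by
  intro a b p
  induction p with
  | nil => intro ha hb h; simp [liftWalk]
  | cons hadj q ih =>
    intro ha hb h
    simp only [liftWalk, SimpleGraph.Walk.support_cons, List.map_cons, ih]
    exact congrArg (List.cons _) (ih _ _ _)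

end Lift

/-- Edge addition lemma: under the stated conditions, `(G, k)` and `(G + {u,v}, k)` are
equivalent instances of Treedepth-η Deletion. -/
theorem edge_addition_lemma {V : Type*} [Fintype V] (η k ℓ : ℕ) (hη : 1 ≤ η)
    (G : SimpleGraph V) (X : Set V) (u v : V) (huv : u ≠ v) (hadj : ¬ G.Adj u v)
    (h1 : IntDisjointPaths (G.induce (X ∪ {u, v}))
      ⟨u, by simp⟩ ⟨v, by simp⟩ (ℓ + η))
    (h2 : ∃ Z : Set V, G.IsTdMod η Z ∧
      (∀ Z' : Set V, G.IsTdMod η Z' → Z.ncard ≤ Z'.ncard) ∧ (Z ∩ X).ncard ≤ ℓ) :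
    (∃ Z : Set V, G.IsTdMod η Z ∧ Z.ncard ≤ k) ↔
      (∃ Z : Set V, (G ⊔ SimpleGraph.fromEdgeSet {s(u, v)}).IsTdMod η Z ∧
        Z.ncard ≤ k) := by
  classical
  obtain ⟨Z₀, hZ₀mod, hZ₀min, hZ₀X⟩ := h2
  set G' := G ⊔ SimpleGraph.fromEdgeSet {s(u, v)} with hG'
  constructor
  · rintro ⟨Z, hZ, hZk⟩
    refine ⟨Z₀, ?_, le_trans (hZ₀min Z hZ) hZk⟩
    by_cases hcase : u ∈ Z₀ ∨ v ∈ Z₀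
    · -- the new edge has an endpoint in Z₀, so the induced graphs coincide
      have hle : (G'.induce Z₀ᶜ) ≤ (G.induce Z₀ᶜ) := by
        intro a b hab
        simp only [SimpleGraph.comap_adj, SimpleGraph.sup_adj,
          SimpleGraph.fromEdgeSet_adj, Set.mem_singleton_iff, hG'] at hab ⊢
        rcases hab with h | ⟨hs, _⟩
        · exact h
        · exfalso
          rcases Sym2.eq_iff.mp hs with ⟨h1', h2'⟩ | ⟨h1', h2'⟩ <;>
          rcases hcase with hc | hc
          · exact a.2 (show (a : V) ∈ Z₀ from (show (a : V) = u from h1') ▸ hc)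
          · exact b.2 (show (b : V) ∈ Z₀ from (show (b : V) = v from h2') ▸ hc)
          · exact b.2 (show (b : V) ∈ Z₀ from (show (b : V) = u from h2') ▸ hc)
          · exact a.2 (show (a : V) ∈ Z₀ from (show (a : V) = v from h1') ▸ hc)
      exact le_trans (treedepth_mono hle) hZ₀mod
    · push_neg at hcase
      obtain ⟨hu0, hv0⟩ := hcase
      have hu0' : u ∈ Z₀ᶜ := hu0
      have hv0' : v ∈ Z₀ᶜ := hv0
      obtain ⟨F, hFdec, hFh⟩ := exists_decomp_treedepth (G.induce Z₀ᶜ)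
      have hFht : F.height ≤ η := hFh ▸ hZ₀mod
      obtain ⟨P, hPpath, hPdisj⟩ := h1
      set S : Set V := X ∪ {u, v} with hS
      -- counting: at most ℓ walks meet Z₀
      set bad : Finset (Fin (ℓ + η)) :=
        Finset.univ.filter (fun i => ∃ x ∈ (P i).support, (x : V) ∈ Z₀) with hbad
      have hbadcard : bad.card ≤ ℓ := by
        have hwit : ∀ i : Fin (ℓ + η), i ∈ bad → ∃ x : ↥S,
            x ∈ (P i).support ∧ (x : V) ∈ Z₀ := by
          intro i hi
          simp only [hbad, Finset.mem_filter] at hi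
          obtain ⟨x, hx1, hx2⟩ := hi.2
          exact ⟨x, hx1, hx2⟩
        set f : Fin (ℓ + η) → V := fun i =>
          if h : ∃ x : ↥S, x ∈ (P i).support ∧ (x : V) ∈ Z₀ then (h.choose : V) else u with hf
        have hfspec : ∀ i ∈ bad, ∃ x : ↥S, x ∈ (P i).support ∧ (x : V) ∈ Z₀ ∧ (x : V) = f i := by
          intro i hi
          obtain ⟨x, hx⟩ := hwit i hi
          have h : ∃ x : ↥S, x ∈ (P i).support ∧ (x : V) ∈ Z₀ := ⟨x, hx⟩
          have hfi : f i = (h.choose : V) := by rw [hf]; exact dif_pos h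
          exact ⟨h.choose, h.choose_spec.1, h.choose_spec.2, hfi.symm⟩
        have hZ₀Xfin : (Z₀ ∩ X).Finite := Set.toFinite _
        have hmaps : ∀ i ∈ bad, f i ∈ hZ₀Xfin.toFinset := by
          intro i hi
          obtain ⟨x, hxsup, hxZ, hxf⟩ := hfspec i hi
          rw [Set.Finite.mem_toFinset]
          refine ⟨hxf ▸ hxZ, ?_⟩
          have hxS : (x : V) ∈ S := x.2
          rcases hxS with hX | hUV
          · exact hxf ▸ hX
          · exfalso
            rcases hUV with h' | h'
            · exact hu0 (h' ▸ hxZ)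
            · exact hv0 ((Set.mem_singleton_iff.mp h') ▸ hxZ)
        have hinj : Set.InjOn f ↑bad := by
          intro i hi j hj hij
          by_contra hne
          obtain ⟨x, hxsup, hxZ, hxf⟩ := hfspec i (by exact hi)
          obtain ⟨y, hysup, hyZ, hyf⟩ := hfspec j (by exact hj)
          have hxy : x = y := Subtype.ext (by rw [hxf, hyf, hij])
          rcases hPdisj i j hne x hxsup (hxy ▸ hysup) with h' | h'
          · exact hu0 (by rw [h'] at hxZ; exact hxZ)
          · exact hv0 (by rw [h'] at hxZ; exact hxZ)
        calc bad.card ≤ hZ₀Xfin.toFinset.card :=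
              Finset.card_le_card_of_injOn f hmaps hinj
          _ = (Z₀ ∩ X).ncard := (Set.ncard_eq_toFinset_card _ hZ₀Xfin).symm
          _ ≤ ℓ := hZ₀X
      -- pick η good walks
      have hgoodcard : η ≤ badᶜ.card := by
        have := Finset.card_compl_add_card bad
        simp only [Fintype.card_fin] at this
        omega
      obtain ⟨s, hssub, hscard⟩ := Finset.exists_subset_card_eq (s := badᶜ) (n := η) hgoodcard
      set g : Fin η → Fin (ℓ + η) := fun i => (s.equivFin.symm (Fin.cast hscard.symm i) : ↥s)
        with hg
      have hginj : Function.Injective g := by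
        intro i j hij
        have h1 : (Fin.cast hscard.symm i) = (Fin.cast hscard.symm j) :=
          s.equivFin.symm.injective (Subtype.ext hij)
        exact Fin.cast_injective _ h1
      have hgood : ∀ (i : Fin η) (x : ↥S), x ∈ (P (g i)).support → (x : V) ∈ Z₀ᶜ := by
        intro i x hx
        have hmem : g i ∈ badᶜ := hssub (by simp [hg])
        rw [Finset.mem_compl, hbad, Finset.mem_filter] at hmem
        intro hxZ
        exact hmem ⟨Finset.mem_univ _, x, hx, hxZ⟩
      -- lift the walks
      set Q : Fin η → (G.induce Z₀ᶜ).Walk ⟨u, hu0'⟩ ⟨v, hv0'⟩ := fun i =>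
        liftWalk G S Z₀ᶜ (P (g i)) hu0' hv0' (fun x hx => hgood i x hx) with hQ
      have hQsup : ∀ (i : Fin η) (w : ↥(Z₀ᶜ)), w ∈ (Q i).support →
          ∃ y : ↥S, y ∈ (P (g i)).support ∧ (y : V) = (w : V) := by
        intro i w hw
        have : (w : V) ∈ (Q i).support.map Subtype.val := List.mem_map_of_mem hw
        rw [hQ] at this
        rw [liftWalk_support] at this
        obtain ⟨y, hy1, hy2⟩ := List.mem_map.mp this
        exact ⟨y, hy1, hy2⟩
      have hQdisj : ∀ i j, i ≠ j → ∀ w, w ∈ (Q i).support → w ∈ (Q j).support →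
          w = (⟨u, hu0'⟩ : ↥(Z₀ᶜ)) ∨ w = (⟨v, hv0'⟩ : ↥(Z₀ᶜ)) := by
        intro i j hij w hwi hwj
        obtain ⟨y, hy1, hy2⟩ := hQsup i w hwi
        obtain ⟨y', hy1', hy2'⟩ := hQsup j w hwj
        have : y = y' := Subtype.ext (by rw [hy2, hy2'])
        rcases hPdisj (g i) (g j) (fun h => hij (hginj h)) y hy1 (this ▸ hy1') with h' | h'
        · left; exact Subtype.ext (by rw [← hy2, h'])
        · right; exact Subtype.ext (by rw [← hy2, h'])
      have hune : (⟨u, hu0'⟩ : ↥(Z₀ᶜ)) ≠ ⟨v, hv0'⟩ := fun h => huv (congrArg Subtype.val h)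
      have had : F.AncDesc ⟨u, hu0'⟩ ⟨v, hv0'⟩ :=
        ancDesc_of_walks hFdec hFht hune Q hQdisj
      -- F is a decomposition of the augmented induced graph
      have hFdec' : (G'.induce Z₀ᶜ).IsTreedepthDecomp F := by
        intro a b hab
        simp only [SimpleGraph.comap_adj, SimpleGraph.sup_adj,
          SimpleGraph.fromEdgeSet_adj, Set.mem_singleton_iff, hG'] at hab
        rcases hab with h | ⟨hs, _⟩
        · exact hFdec h
        · rcases Sym2.eq_iff.mp hs with ⟨h1', h2'⟩ | ⟨h1', h2'⟩
          · have ha : a = ⟨u, hu0'⟩ := Subtype.ext h1'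
            have hb : b = ⟨v, hv0'⟩ := Subtype.ext h2'
            rw [ha, hb]; exact had
          · have ha : a = ⟨v, hv0'⟩ := Subtype.ext h1'
            have hb : b = ⟨u, hu0'⟩ := Subtype.ext h2'
            rw [ha, hb]; exact had.symm
      exact le_trans (treedepth_le_of_decomp hFdec') hFht
  · rintro ⟨Z, hZ, hZk⟩
    refine ⟨Z, ?_, hZk⟩
    have hle : (G.induce Zᶜ) ≤ (G'.induce Zᶜ) := by
      intro a b hab
      simp only [SimpleGraph.comap_adj, SimpleGraph.sup_adj] at hab ⊢
      exact Or.inl hab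
    exact le_trans (treedepth_mono hle) hZ
end

section
/- Let η ≥ 1, let (G, k) be an instance of Treedepth-η Deletion, and let ℓ be a non-negative integer. Let S ⊆ V(G) and let v ∈ V(G) \ S be such that N_G(S) ⊆ N_G[v]. Let X_1, …, X_{ℓ+η} ⊆ V(G) induce connected subgraphs of G such that: (1) for all i ∈ [ℓ+η], td(G[X_i]) ≥ td(G[S]) and v ∈ N_G(X_i); (2) the sets X_1, …, X_{ℓ+η} are pairwise disjoint and disjoint from S; and (3) every graph obtained from G by removing a subset of the edges between v and S has a minimum-size treedepth-η modulator containing at most ℓ vertices of 𝒳 := X_1 ∪ … ∪ X_{ℓ+η}. Let G' be the graph obtained from G by removing all edges between v and S. Then G has a treedepth-η modulator of size at most k if and only if G' does. -/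
namespace RootedForest

variable {V : Type*} {F : RootedForest V}

lemma Anc.refl (x : V) : F.Anc x x := Relation.ReflTransGen.refl

lemma Anc.trans {x y z : V} (h : F.Anc x y) (h' : F.Anc y z) : F.Anc x z :=
  Relation.ReflTransGen.trans h h'

lemma ProperAnc.anc {x y : V} (h : F.ProperAnc x y) : F.Anc x y :=
  h.to_reflTransGen

lemma anc_of_parent {x y : V} (h : F.parent x = some y) : F.Anc x y :=
  Relation.ReflTransGen.single h

lemma Anc.properAnc_of_ne {x y : V} (h : F.Anc x y) (hne : x ≠ y) : F.ProperAnc x y := by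
  rcases (Relation.reflTransGen_iff_eq_or_transGen.mp h) with h1 | h1
  · exact absurd h1.symm hne
  · exact h1

lemma ProperAnc.trans_anc {x y z : V} (h : F.ProperAnc x y) (h' : F.Anc y z) :
    F.ProperAnc x z := Relation.TransGen.trans_left h h'

lemma Anc.trans_proper {x y z : V} (h : F.Anc x y) (h' : F.ProperAnc y z) :
    F.ProperAnc x z := Relation.TransGen.trans_right h h'

lemma Anc.ne_of_proper {x y : V} (h : F.ProperAnc x y) : x ≠ y := by
  rintro rfl; exact F.acyclic x h

/-- ancestors of a fixed vertex form a chain -/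
lemma anc_comparable_s12 {x y z : V} (h : F.Anc x y) (h' : F.Anc x z) :
    F.Anc y z ∨ F.Anc z y := by
  induction h using Relation.ReflTransGen.head_induction_on with
  | refl => exact Or.inl h'
  | head hstep htail ih =>
    rcases Relation.ReflTransGen.cases_head h' with rfl | ⟨c', hstep', htail'⟩
    · exact Or.inr ((anc_of_parent hstep).trans htail)
    · rw [hstep] at hstep'
      cases Option.some_injective _ hstep'
      exact ih htail'

lemma anc_antisymm_s12 {x y : V} (h : F.Anc x y) (h' : F.Anc y x) : x = y := by
  by_contra hne
  exact F.acyclic x ((h.properAnc_of_ne hne).trans_anc h')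

lemma AncDesc.symm' {x y : V} (h : F.AncDesc x y) : F.AncDesc y x := Or.symm h

lemma ancDesc_refl (x : V) : F.AncDesc x x := Or.inl (Anc.refl x)

lemma depth_eq_ncard (x : V) : F.depth x = {u | F.Anc x u}.ncard :=
  (Nat.card_coe_set_eq _).symm ▸ rfl

lemma ancSet_finite [Finite V] (x : V) : {u | F.Anc x u}.Finite := Set.toFinite _

lemma depth_mono [Finite V] {x y : V} (h : F.Anc x y) : F.depth y ≤ F.depth x := by
  rw [depth_eq_ncard, depth_eq_ncard]
  exact Set.ncard_le_ncard (fun u hu => h.trans hu) (Set.toFinite _)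

lemma depth_strict_mono [Finite V] {x y : V} (h : F.ProperAnc x y) :
    F.depth y < F.depth x := by
  rw [depth_eq_ncard, depth_eq_ncard]
  apply Set.ncard_lt_ncard _ (Set.toFinite _)
  constructor
  · exact fun u hu => h.anc.trans hu
  · intro hsub
    have hx : x ∈ {u | F.Anc x u} := Anc.refl x
    have : F.Anc y x := hsub hx
    exact F.acyclic x (h.trans_anc this)

lemma eq_of_anc_of_depth_le [Finite V] {x y : V} (h : F.Anc x y)
    (hd : F.depth x ≤ F.depth y) : x = y := by
  by_contra hne
  exact absurd hd (not_le.mpr (depth_strict_mono (h.properAnc_of_ne hne)))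

lemma one_le_depth [Finite V] (x : V) : 1 ≤ F.depth x := by
  rw [depth_eq_ncard]
  have : ({u | F.Anc x u} : Set V).Nonempty := ⟨x, Anc.refl x⟩
  have := this.ncard_pos (Set.toFinite _)
  omega

lemma depth_le_height_s12 [Finite V] (x : V) : F.depth x ≤ F.height :=
  le_csSup (Set.Finite.bddAbove (Set.finite_range _)) (Set.mem_range_self x)

lemma height_le {n : ℕ} (h : ∀ x : V, F.depth x ≤ n) : F.height ≤ n :=
  csSup_le' (by rintro a ⟨x, rfl⟩; exact h x)

/-- comparability of two ancestors, with depth order -/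
lemma anc_of_anc_of_depth_le [Finite V] {x y z : V} (hy : F.Anc x y) (hz : F.Anc x z)
    (hd : F.depth z ≤ F.depth y) : F.Anc y z := by
  rcases anc_comparable_s12 hy hz with h | h
  · exact h
  · have := eq_of_anc_of_depth_le h hd
    subst this
    exact Anc.refl _

end RootedForest

namespace RootedForest

variable {V W : Type*}

/-- Transport a rooted forest along an equivalence. -/
def emap (e : V ≃ W) (F : RootedForest V) : RootedForest W where
  parent w := (F.parent (e.symm w)).map e
  acyclic := by
    intro w hw
    apply F.acyclic (e.symm w)
    have key : ∀ a b : W, Relation.TransGen (fun a b => (F.parent (e.symm a)).map e = some b) a b →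
        Relation.TransGen (fun a b => F.parent a = some b) (e.symm a) (e.symm b) := by
      intro a b h
      induction h with
      | single hs =>
        apply Relation.TransGen.single
        rcases Option.map_eq_some_iff.mp hs with ⟨p, hp, rfl⟩
        simpa using hp
      | tail _ hs ih =>
        apply Relation.TransGen.tail ih
        rcases Option.map_eq_some_iff.mp hs with ⟨p, hp, rfl⟩
        simpa using hp
    exact key w w hw

lemma emap_step (e : V ≃ W) (F : RootedForest V) {a b : V} (h : F.parent a = some b) :
    (F.emap e).parent (e a) = some (e b) := by
  simp [emap, h]

lemma emap_anc (e : V ≃ W) (F : RootedForest V) {a b : V} (h : F.Anc a b) :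
    (F.emap e).Anc (e a) (e b) := by
  induction h with
  | refl => exact Anc.refl _
  | tail _ hs ih => exact ih.trans (anc_of_parent (emap_step e F hs))

lemma emap_anc_iff (e : V ≃ W) (F : RootedForest V) {a b : W} :
    (F.emap e).Anc a b ↔ F.Anc (e.symm a) (e.symm b) := by
  constructor
  · intro h
    induction h with
    | refl => exact Anc.refl _
    | tail _ hs ih =>
      rcases Option.map_eq_some_iff.mp hs with ⟨p, hp, rfl⟩
      simp only [Equiv.symm_apply_apply]
      exact ih.trans (anc_of_parent hp)
  · intro h
    have := emap_anc e F h
    simpa using this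

lemma emap_depth (e : V ≃ W) (F : RootedForest V) (a : W) :
    (F.emap e).depth a = F.depth (e.symm a) := by
  unfold depth
  apply Nat.card_eq_of_bijective (fun u => ⟨e.symm u.1, (emap_anc_iff e F).mp u.2⟩)
  constructor
  · rintro ⟨u, hu⟩ ⟨u', hu'⟩ h
    simp only [Subtype.mk.injEq] at h ⊢
    exact e.symm.injective h
  · rintro ⟨u, hu⟩
    exact ⟨⟨e u, by rwa [emap_anc_iff, Equiv.symm_apply_apply]⟩, by simp⟩

lemma emap_height (e : V ≃ W) (F : RootedForest V) :
    (F.emap e).height = F.height := by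
  unfold height
  congr 1
  ext n
  constructor
  · rintro ⟨a, rfl⟩; exact ⟨e.symm a, (emap_depth e F a).symm⟩
  · rintro ⟨a, rfl⟩; exact ⟨e a, by rw [emap_depth]; simp⟩

/-- The chain forest on `Fin n`. -/
def finChain (n : ℕ) : RootedForest (Fin n) where
  parent i := if h : (i : ℕ) + 1 < n then some ⟨(i : ℕ) + 1, h⟩ else none
  acyclic := by
    intro v hv
    have step_lt : ∀ a b : Fin n,
        (if h : (a : ℕ) + 1 < n then some (⟨(a : ℕ) + 1, h⟩ : Fin n) else none) = some b →
        (a : ℕ) < (b : ℕ) := by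
      intro a b hs
      split at hs
      · have : (⟨(a : ℕ) + 1, _⟩ : Fin n) = b := Option.some_injective _ hs
        rw [← this]
        simp
      · simp at hs
    have key : ∀ a b : Fin n, Relation.TransGen
        (fun a b : Fin n => (if h : (a : ℕ) + 1 < n then some (⟨(a : ℕ) + 1, h⟩ : Fin n) else none) = some b) a b →
        (a : ℕ) < (b : ℕ) := by
      intro a b h
      induction h with
      | single hs => exact step_lt _ _ hs
      | tail _ hs ih => exact lt_trans ih (step_lt _ _ hs)
    exact absurd (key v v hv) (lt_irrefl _)

lemma finChain_anc_of_le (n : ℕ) {a b : Fin n} (h : (a : ℕ) ≤ (b : ℕ)) :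
    (finChain n).Anc a b := by
  obtain ⟨k, hk⟩ : ∃ k, (b : ℕ) = (a : ℕ) + k := ⟨b - a, by omega⟩
  induction k generalizing a with
  | zero => have : a = b := Fin.ext (by omega); subst this; exact Anc.refl _
  | succ m ih =>
    have hlt : (a : ℕ) + 1 < n := by have := b.isLt; omega
    have step : (finChain n).parent a = some ⟨(a : ℕ) + 1, hlt⟩ := by
      simp [finChain, hlt]
    exact (anc_of_parent step).trans (ih (a := ⟨(a:ℕ)+1, hlt⟩) (by simp; omega) (by simp; omega))

lemma finChain_total (n : ℕ) (a b : Fin n) : (finChain n).AncDesc a b := by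
  rcases le_total (a : ℕ) (b : ℕ) with h | h
  · exact Or.inl (finChain_anc_of_le n h)
  · exact Or.inr (finChain_anc_of_le n h)

/-- Every fintype carries a totally-comparable rooted forest. -/
lemma exists_total_forest (V : Type*) [Fintype V] :
    ∃ F : RootedForest V, ∀ x y : V, F.AncDesc x y := by
  classical
  let e := (Fintype.equivFin V).symm
  refine ⟨(finChain (Fintype.card V)).emap e, fun x y => ?_⟩
  rcases finChain_total (Fintype.card V) (e.symm x) (e.symm y) with h | h
  · exact Or.inl (by simpa using emap_anc e _ h)
  · exact Or.inr (by simpa using emap_anc e _ h)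

end RootedForest

section TreedepthBasics

variable {V : Type*}

lemma SimpleGraph.treedepth_le_height (G : SimpleGraph V) (F : RootedForest V)
    (hF : G.IsTreedepthDecomp F) : G.treedepth ≤ F.height :=
  Nat.sInf_le ⟨F, hF, rfl⟩

lemma SimpleGraph.exists_optimal_decomp [Fintype V] (G : SimpleGraph V) :
    ∃ F : RootedForest V, G.IsTreedepthDecomp F ∧ F.height = G.treedepth := by
  have hne : {n : ℕ | ∃ F : RootedForest V, G.IsTreedepthDecomp F ∧ F.height = n}.Nonempty := by
    obtain ⟨F, hF⟩ := RootedForest.exists_total_forest V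
    exact ⟨F.height, F, fun u v _ => hF u v, rfl⟩
  exact Nat.sInf_mem hne

lemma SimpleGraph.treedepth_mono [Fintype V] {G H : SimpleGraph V}
    (h : ∀ ⦃a b : V⦄, H.Adj a b → G.Adj a b) : H.treedepth ≤ G.treedepth := by
  obtain ⟨F, hF, hh⟩ := G.exists_optimal_decomp
  rw [← hh]
  exact H.treedepth_le_height F (fun a b hab => hF (h hab))

end TreedepthBasics

namespace RootedForest

variable {V : Type*}

open Classical in
/-- The nearest proper ancestor of `x` lying in `T`, if any. -/
noncomputable def nextOut [Finite V] (F : RootedForest V) (T : Set V) (x : V) : Option V :=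
  if h : {w | w ∈ T ∧ F.ProperAnc x w}.Nonempty then
    some (Set.exists_max_image _ F.depth (Set.toFinite _) h).choose
  else none

lemma nextOut_spec [Finite V] (F : RootedForest V) (T : Set V) (x : V) {w : V}
    (h : F.nextOut T x = some w) :
    w ∈ T ∧ F.ProperAnc x w ∧ ∀ u ∈ T, F.ProperAnc x u → F.Anc w u := by
  classical
  unfold nextOut at h
  split at h
  · rename_i hne
    have hch := (Set.exists_max_image {w | w ∈ T ∧ F.ProperAnc x w} F.depth
      (Set.toFinite _) hne).choose_spec
    cases Option.some_injective _ h
    obtain ⟨⟨hwT, hwP⟩, hmax⟩ := hch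
    refine ⟨hwT, hwP, fun u hu hpu => ?_⟩
    exact anc_of_anc_of_depth_le hwP.anc hpu.anc (hmax u ⟨hu, hpu⟩)
  · simp at h

lemma nextOut_eq_none [Finite V] (F : RootedForest V) (T : Set V) (x : V)
    (h : F.nextOut T x = none) : ∀ u ∈ T, ¬ F.ProperAnc x u := by
  classical
  unfold nextOut at h
  split at h
  · simp at h
  · rename_i hne
    intro u hu hp
    exact hne ⟨u, hu, hp⟩

lemma nextOut_isSome [Finite V] (F : RootedForest V) (T : Set V) (x : V)
    (hne : {w | w ∈ T ∧ F.ProperAnc x w}.Nonempty) : ∃ w, F.nextOut T x = some w := by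
  classical
  unfold nextOut
  rw [dif_pos hne]
  exact ⟨_, rfl⟩

/-- Restriction of a rooted forest to a subset, connecting each vertex to its
nearest proper ancestor inside the subset. -/
noncomputable def restrict [Finite V] (F : RootedForest V) (U : Set V) : RootedForest ↥U where
  parent x :=
    match h : F.nextOut U ↑x with
    | some w => some ⟨w, (F.nextOut_spec U ↑x h).1⟩
    | none => none
  acyclic := by
    intro a ha
    have key : ∀ a b : ↥U, Relation.TransGen (fun a b : ↥U =>
        (match h : F.nextOut U ↑a with
          | some w => some ⟨w, (F.nextOut_spec U ↑a h).1⟩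
          | none => none) = some b) a b → F.ProperAnc ↑a ↑b := by
      intro a b h
      induction h with
      | single hs =>
        split at hs
        · rename_i w hw
          cases Option.some_injective _ hs
          exact (F.nextOut_spec U ↑a hw).2.1
        · simp at hs
      | tail _ hs ih =>
        rename_i c hc
        split at hs
        · rename_i w hw
          cases Option.some_injective _ hs
          exact ih.trans_anc (F.nextOut_spec U _ hw).2.1.anc
        · simp at hs
    exact F.acyclic ↑a (key a a ha)

lemma restrict_step [Finite V] (F : RootedForest V) (U : Set V) {a b : ↥U}
    (h : (F.restrict U).parent a = some b) : F.nextOut U ↑a = some ↑b := by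
  unfold restrict at h
  simp only at h
  split at h
  · rename_i w hw
    cases Option.some_injective _ h
    exact hw
  · simp at h

lemma restrict_anc_coe [Finite V] (F : RootedForest V) (U : Set V) {a b : ↥U}
    (h : (F.restrict U).Anc a b) : F.Anc ↑a ↑b := by
  induction h with
  | refl => exact Anc.refl _
  | tail _ hs ih =>
    exact ih.trans (F.nextOut_spec U _ (restrict_step F U hs)).2.1.anc

lemma restrict_anc [Finite V] (F : RootedForest V) (U : Set V) (a b : ↥U)
    (h : F.Anc ↑a ↑b) : (F.restrict U).Anc a b := by
  obtain ⟨n, hn⟩ : ∃ n, F.depth ↑a = n := ⟨_, rfl⟩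
  induction n using Nat.strong_induction_on generalizing a with
  | _ n ih =>
    by_cases hab : a = b
    · subst hab; exact Anc.refl _
    · have hp : F.ProperAnc ↑a ↑b := h.properAnc_of_ne (fun hc => hab (Subtype.ext hc))
      obtain ⟨w, hw⟩ := F.nextOut_isSome U ↑a ⟨↑b, b.2, hp⟩
      have hspec := F.nextOut_spec U ↑a hw
      have hwb : F.Anc w ↑b := hspec.2.2 ↑b b.2 hp
      have hdw : F.depth w < n := hn ▸ depth_strict_mono hspec.2.1
      have step : (F.restrict U).parent a = some ⟨w, hspec.1⟩ := by
        unfold restrict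
        simp only
        split
        · rename_i w' hw'
          rw [hw'] at hw
          cases Option.some_injective _ hw
          rfl
        · rename_i hnone
          rw [hnone] at hw
          simp at hw
      exact (anc_of_parent step).trans (ih _ hdw ⟨w, hspec.1⟩ hwb rfl)

lemma restrict_decomp [Finite V] (F : RootedForest V) (U : Set V) {G : SimpleGraph V}
    (hF : G.IsTreedepthDecomp F) : (G.induce U).IsTreedepthDecomp (F.restrict U) := by
  intro a b hab
  rcases hF hab with h | h
  · exact Or.inl (restrict_anc F U a b h)
  · exact Or.inr (restrict_anc F U b a h)

lemma restrict_depth_le [Finite V] (F : RootedForest V) (U : Set V) (a : ↥U) :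
    (F.restrict U).depth a ≤ F.depth ↑a := by
  unfold depth
  apply Nat.card_le_card_of_injective
    (fun u : {u : ↥U // (F.restrict U).Anc a u} =>
      (⟨↑u.1, restrict_anc_coe F U u.2⟩ : {w : V // F.Anc ↑a w}))
  rintro ⟨⟨u, hu⟩, h1⟩ ⟨⟨u', hu'⟩, h2⟩ h
  simp only [Subtype.mk.injEq] at h ⊢
  exact h

lemma restrict_height_le [Finite V] (F : RootedForest V) (U : Set V) :
    (F.restrict U).height ≤ F.height :=
  height_le (fun a => le_trans (restrict_depth_le F U a) (depth_le_height_s12 _))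

lemma restrict_depth_subtree [Finite V] (F : RootedForest V) (U : Set V) (m : V)
    (hsub : ∀ u ∈ U, F.Anc u m) (hm : ∀ u ∈ U, F.Anc m u → u = m) (a : ↥U) :
    (F.restrict U).depth a + F.depth m ≤ F.depth ↑a + 1 := by
  classical
  have hAa : F.Anc ↑a m := hsub ↑a a.2
  set A' : Set V := (↑· : ↥U → V) '' {b : ↥U | (F.restrict U).Anc a b} with hA'
  set C : Set V := {u | F.Anc m u} with hC
  set B : Set V := {u | F.Anc ↑a u} with hB
  have hA'B : A' ⊆ B := by
    rintro _ ⟨b, hb, rfl⟩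
    exact restrict_anc_coe F U hb
  have hCB : C ⊆ B := fun u hu => hAa.trans hu
  have hint : A' ∩ C ⊆ {m} := by
    rintro u ⟨⟨b, _, rfl⟩, hu2⟩
    exact hm ↑b b.2 hu2
  have hd1 : (F.restrict U).depth a = A'.ncard := by
    rw [depth_eq_ncard, hA']
    exact (Set.ncard_image_of_injective _ Subtype.val_injective).symm
  have hd2 : F.depth m = C.ncard := depth_eq_ncard m
  have hd3 : F.depth ↑a = B.ncard := depth_eq_ncard _
  rw [hd1, hd2, hd3]
  have h1 : (A' ∪ C).ncard + (A' ∩ C).ncard = A'.ncard + C.ncard :=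
    Set.ncard_union_add_ncard_inter _ _ (Set.toFinite _) (Set.toFinite _)
  have h2 : (A' ∪ C).ncard ≤ B.ncard :=
    Set.ncard_le_ncard (Set.union_subset hA'B hCB) (Set.toFinite _)
  have h3 : (A' ∩ C).ncard ≤ 1 := by
    calc (A' ∩ C).ncard ≤ ({m} : Set V).ncard := Set.ncard_le_ncard hint (Set.toFinite _)
    _ = 1 := Set.ncard_singleton m
  omega

end RootedForest

namespace RootedForest

variable {W : Type*} [Finite W]

/-- Re-hang the vertices of `M` below `v` according to the forest `FM`,
keeping the rest of `F` (with `M` skipped over). -/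
noncomputable def combine (F : RootedForest W) (M : Set W) [DecidablePred (· ∈ M)]
    (v : W) (hv : v ∉ M) (FM : RootedForest ↥M) : RootedForest W where
  parent x :=
    if hx : x ∈ M then
      (match FM.parent ⟨x, hx⟩ with
        | some p => some ↑p
        | none => some v)
    else F.nextOut Mᶜ x
  acyclic := by
    classical
    intro a ha
    set φ : W → ℕ := fun x =>
      if hx : x ∈ M then (F.height + 1) + FM.depth ⟨x, hx⟩ else F.depth x with hφ
    have hstep : ∀ x y : W,
        (if hx : x ∈ M then
          (match FM.parent ⟨x, hx⟩ with
            | some p => some ↑p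
            | none => some v)
        else F.nextOut Mᶜ x) = some y → φ y < φ x := by
      intro x y hxy
      split at hxy
      · rename_i hx
        split at hxy
        · rename_i p hp
          cases Option.some_injective _ hxy
          have hpd : FM.depth p < FM.depth ⟨x, hx⟩ :=
            depth_strict_mono (Relation.TransGen.single hp)
          simp only [hφ]
          rw [dif_pos hx, dif_pos p.2]
          simp only [Subtype.coe_eta]
          omega
        · cases Option.some_injective _ hxy
          simp only [hφ]
          rw [dif_pos hx, dif_neg hv]
          have := depth_le_height_s12 (F := F) v
          omega
      · rename_i hx
        have hspec := F.nextOut_spec Mᶜ x hxy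
        have h1 : F.depth y < F.depth x := depth_strict_mono hspec.2.1
        simp only [hφ]
        rw [dif_neg hx, dif_neg hspec.1]
        omega
    have key : ∀ a b : W, Relation.TransGen (fun x y : W =>
        (if hx : x ∈ M then
          (match FM.parent ⟨x, hx⟩ with
            | some p => some ↑p
            | none => some v)
        else F.nextOut Mᶜ x) = some y) a b → φ b < φ a := by
      intro a b h
      induction h with
      | single hs => exact hstep _ _ hs
      | tail _ hs ih => exact lt_trans (hstep _ _ hs) ih
    exact absurd (key a a ha) (lt_irrefl _)

variable {F : RootedForest W} {M : Set W} [DecidablePred (· ∈ M)] {v : W} {hv : v ∉ M}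
  {FM : RootedForest ↥M}

lemma combine_parent_eq (x : W) :
    (F.combine M v hv FM).parent x =
      (if hx : x ∈ M then
        (match FM.parent ⟨x, hx⟩ with
          | some p => some ↑p
          | none => some v)
      else F.nextOut Mᶜ x) := rfl

lemma combine_anc_of_out {x y : W} (hx : x ∉ M) (hy : y ∉ M) (h : F.Anc x y) :
    (F.combine M v hv FM).Anc x y := by
  obtain ⟨n, hn⟩ : ∃ n, F.depth x = n := ⟨_, rfl⟩
  induction n using Nat.strong_induction_on generalizing x with
  | _ n ih =>
    by_cases hxy : x = y
    · subst hxy; exact Anc.refl _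
    · have hp : F.ProperAnc x y := h.properAnc_of_ne hxy
      obtain ⟨w, hw⟩ := F.nextOut_isSome Mᶜ x ⟨y, hy, hp⟩
      have hspec := F.nextOut_spec Mᶜ x hw
      have hwy : F.Anc w y := hspec.2.2 y hy hp
      have step : (F.combine M v hv FM).parent x = some w := by
        rw [combine_parent_eq, dif_neg hx, hw]
      exact (anc_of_parent step).trans
        (ih (F.depth w) (hn ▸ depth_strict_mono hspec.2.1) hspec.1 hwy rfl)

lemma combine_anc_out_elim {x y : W} (hx : x ∉ M) (h : (F.combine M v hv FM).Anc x y) :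
    y ∉ M ∧ F.Anc x y := by
  induction h using Relation.ReflTransGen.head_induction_on with
  | refl => exact ⟨hx, Anc.refl _⟩
  | head hs _ ih =>
    rename_i a c _
    rw [combine_parent_eq, dif_neg hx] at hs
    have hspec := F.nextOut_spec Mᶜ a hs
    obtain ⟨hyM, hcy⟩ := ih hspec.1
    exact ⟨hyM, hspec.2.1.anc.trans hcy⟩

lemma combine_anc_of_mem {a b : ↥M} (h : FM.Anc a b) :
    (F.combine M v hv FM).Anc ↑a ↑b := by
  induction h with
  | refl => exact Anc.refl _
  | tail _ hs ih =>
    rename_i b c _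
    refine ih.trans (anc_of_parent ?_)
    rw [combine_parent_eq, dif_pos b.2]
    simp only [Subtype.coe_eta, hs]

lemma combine_anc_to_v {x : W} (hx : x ∈ M) : (F.combine M v hv FM).Anc x v := by
  obtain ⟨n, hn⟩ : ∃ n, FM.depth ⟨x, hx⟩ = n := ⟨_, rfl⟩
  induction n using Nat.strong_induction_on generalizing x with
  | _ n ih =>
    rcases hp : FM.parent ⟨x, hx⟩ with _ | p
    · refine anc_of_parent ?_
      rw [combine_parent_eq, dif_pos hx, hp]
    · have step : (F.combine M v hv FM).parent x = some ↑p := by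
        rw [combine_parent_eq, dif_pos hx, hp]
      have hd : FM.depth p < n := hn ▸ depth_strict_mono (Relation.TransGen.single hp)
      exact (anc_of_parent step).trans (ih (FM.depth p) hd p.2 (by simp))

lemma combine_anc_mem_elim {x u : W} (hx : x ∈ M) (h : (F.combine M v hv FM).Anc x u) :
    (∃ hu : u ∈ M, FM.Anc ⟨x, hx⟩ ⟨u, hu⟩) ∨ (u ∉ M ∧ F.Anc v u) := by
  obtain ⟨n, hn⟩ : ∃ n, FM.depth ⟨x, hx⟩ = n := ⟨_, rfl⟩
  induction n using Nat.strong_induction_on generalizing x with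
  | _ n ih =>
    rcases Relation.ReflTransGen.cases_head h with rfl | ⟨c, hs, htail⟩
    · exact Or.inl ⟨hx, Anc.refl _⟩
    · rw [combine_parent_eq, dif_pos hx] at hs
      split at hs
      · rename_i p hp
        cases Option.some_injective _ hs
        have hd : FM.depth p < n := hn ▸ depth_strict_mono (Relation.TransGen.single hp)
        rcases ih (FM.depth p) hd p.2 (by exact htail) rfl with ⟨hu, hanc⟩ | hout
        · exact Or.inl ⟨hu, (anc_of_parent (by simpa using hp)).trans hanc⟩
        · exact Or.inr hout
      · cases Option.some_injective _ hs
        obtain ⟨huM, hvy⟩ := combine_anc_out_elim hv htail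
        exact Or.inr ⟨huM, hvy⟩

lemma combine_depth_out {x : W} (hx : x ∉ M) :
    (F.combine M v hv FM).depth x ≤ F.depth x := by
  unfold depth
  exact Nat.card_le_card_of_injective
    (fun u : {u : W // (F.combine M v hv FM).Anc x u} =>
      (⟨u.1, (combine_anc_out_elim hx u.2).2⟩ : {u : W // F.Anc x u}))
    (by rintro ⟨u, h1⟩ ⟨u', h2⟩ h; simpa using congrArg Subtype.val h)

lemma combine_depth_mem {x : W} (hx : x ∈ M) :
    (F.combine M v hv FM).depth x ≤ FM.depth ⟨x, hx⟩ + F.depth v := by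
  classical
  have hsub : {u | (F.combine M v hv FM).Anc x u} ⊆
      ((↑· : ↥M → W) '' {p : ↥M | FM.Anc ⟨x, hx⟩ p}) ∪ {u | F.Anc v u} := by
    intro u hu
    rcases combine_anc_mem_elim hx hu with ⟨huM, hanc⟩ | ⟨_, hanc⟩
    · exact Or.inl ⟨⟨u, huM⟩, hanc, rfl⟩
    · exact Or.inr hanc
  calc (F.combine M v hv FM).depth x
      = {u | (F.combine M v hv FM).Anc x u}.ncard := depth_eq_ncard x
    _ ≤ (((↑· : ↥M → W) '' {p : ↥M | FM.Anc ⟨x, hx⟩ p}) ∪ {u | F.Anc v u}).ncard :=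
        Set.ncard_le_ncard hsub (Set.toFinite _)
    _ ≤ ((↑· : ↥M → W) '' {p : ↥M | FM.Anc ⟨x, hx⟩ p}).ncard + {u | F.Anc v u}.ncard :=
        Set.ncard_union_le _ _
    _ = FM.depth ⟨x, hx⟩ + F.depth v := by
        rw [Set.ncard_image_of_injective _ Subtype.val_injective,
          ← depth_eq_ncard, ← depth_eq_ncard]

lemma combine_decomp {H : SimpleGraph W}
    (hyp1 : ∀ a b : W, a ∉ M → b ∉ M → H.Adj a b → F.AncDesc a b)
    (hyp2 : ∀ a : W, a ∈ M → ∀ b : W, b ∉ M → H.Adj a b → b = v ∨ F.ProperAnc v b)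
    (hyp3 : (H.induce M).IsTreedepthDecomp FM) :
    H.IsTreedepthDecomp (F.combine M v hv FM) := by
  intro a b hab
  by_cases ha : a ∈ M <;> by_cases hb : b ∈ M
  · rcases hyp3 (u := ⟨a, ha⟩) (v := ⟨b, hb⟩) hab with h | h
    · exact Or.inl (combine_anc_of_mem h)
    · exact Or.inr (combine_anc_of_mem h)
  · rcases hyp2 a ha b hb hab with rfl | h
    · exact Or.inl (combine_anc_to_v ha)
    · exact Or.inl ((combine_anc_to_v ha).trans (combine_anc_of_out hv hb h.anc))
  · rcases hyp2 b hb a ha hab.symm with rfl | h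
    · exact Or.inr (combine_anc_to_v hb)
    · exact Or.inr ((combine_anc_to_v hb).trans (combine_anc_of_out hv ha h.anc))
  · rcases hyp1 a b ha hb hab with h | h
    · exact Or.inl (combine_anc_of_out ha hb h)
    · exact Or.inr (combine_anc_of_out hb ha h)

end RootedForest

section Transport

variable {A B : Type*}

lemma RootedForest.emap_decomp (e : A ≃ B) (F : RootedForest A) {G₁ : SimpleGraph A}
    {G₂ : SimpleGraph B} (hadj : ∀ b b' : B, G₂.Adj b b' → G₁.Adj (e.symm b) (e.symm b'))
    (hF : G₁.IsTreedepthDecomp F) : G₂.IsTreedepthDecomp (F.emap e) := by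
  intro b b' h
  rcases hF (hadj _ _ h) with h' | h'
  · exact Or.inl (by rw [RootedForest.emap_anc_iff]; simpa using h')
  · exact Or.inr (by rw [RootedForest.emap_anc_iff]; simpa using h')

lemma SimpleGraph.treedepth_le_equiv [Fintype A] (G₁ : SimpleGraph A) (G₂ : SimpleGraph B)
    (e : A ≃ B) (hadj : ∀ b b' : B, G₂.Adj b b' → G₁.Adj (e.symm b) (e.symm b')) :
    G₂.treedepth ≤ G₁.treedepth := by
  obtain ⟨F, hF, hh⟩ := G₁.exists_optimal_decomp
  calc G₂.treedepth ≤ (F.emap e).height :=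
        G₂.treedepth_le_height _ (RootedForest.emap_decomp e F hadj hF)
    _ = G₁.treedepth := by rw [RootedForest.emap_height, hh]

lemma SimpleGraph.connected_transport (e : A ≃ B) {G₁ : SimpleGraph A} {G₂ : SimpleGraph B}
    (hadj : ∀ a a' : A, G₁.Adj a a' → G₂.Adj (e a) (e a')) (h : G₁.Connected) :
    G₂.Connected :=
  SimpleGraph.Connected.map ⟨e, fun hadj' => hadj _ _ hadj'⟩ e.surjective h

end Transport

namespace RootedForest

/-- In a treedepth decomposition, a connected induced subgraph has an apex:
a vertex that is an ancestor of all its vertices. -/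
lemma exists_apex {W : Type*} [Finite W] (F : RootedForest W) (HH : SimpleGraph W) (U : Set W)
    (hconn : (HH.induce U).Connected)
    (hdec : ∀ a b : ↥U, (HH.induce U).Adj a b → F.AncDesc (↑a) (↑b)) :
    ∃ m : ↥U, ∀ x : ↥U, F.Anc ↑x ↑m := by
  have hne : Nonempty ↥U := hconn.nonempty
  obtain ⟨m, hm⟩ := Finite.exists_min (fun x : ↥U => F.depth ↑x)
  refine ⟨m, fun x => ?_⟩
  have key : ∀ a b : ↥U, (HH.induce U).Walk a b → F.Anc ↑a ↑m → F.Anc ↑b ↑m := by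
    intro a b w
    induction w with
    | nil => exact id
    | cons h p ih =>
      rename_i a' c' b' _
      intro ham
      apply ih
      rcases hdec _ _ h with h' | h'
      · -- c' is an ancestor of a'
        rcases anc_comparable_s12 h' ham with h'' | h''
        · exact h''
        · have heq : (↑m : W) = _ := eq_of_anc_of_depth_le h'' (hm _)
          rw [heq]
          exact Anc.refl _
      · exact h'.trans ham
  obtain ⟨w⟩ := hconn.preconnected m x
  exact key m x w (Anc.refl _)

end RootedForest
/-- Edge removal lemma: under the stated conditions, `(G, k)` is equivalent to the
instance `(G', k)` where `G'` is obtained from `G` by removing all edges between `v`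
and `S`. -/
theorem edge_removal_lemma {V : Type*} [Fintype V] (η k ℓ : ℕ) (hη : 1 ≤ η)
    (G : SimpleGraph V) (S : Set V) (v : V) (hv : v ∉ S)
    (hN : G.nbhdSet S ⊆ insert v (G.neighborSet v))
    (X : Fin (ℓ + η) → Set V)
    (hconn : ∀ i : Fin (ℓ + η), (G.induce (X i)).Connected)
    (h1 : ∀ i : Fin (ℓ + η),
      (G.induce S).treedepth ≤ (G.induce (X i)).treedepth ∧ v ∈ G.nbhdSet (X i))
    (h2 : ∀ i j : Fin (ℓ + η), i ≠ j → Disjoint (X i) (X j))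
    (h2' : ∀ i : Fin (ℓ + η), Disjoint (X i) S)
    (h3 : ∀ E ⊆ {e : Sym2 V | ∃ s ∈ S, e = s(v, s)},
      ∃ Z : Set V, (G.deleteEdges E).IsTdMod η Z ∧
        (∀ Z' : Set V, (G.deleteEdges E).IsTdMod η Z' → Z.ncard ≤ Z'.ncard) ∧
        (Z ∩ ⋃ i : Fin (ℓ + η), X i).ncard ≤ ℓ) :
    (∃ Z : Set V, G.IsTdMod η Z ∧ Z.ncard ≤ k) ↔
      (∃ Z : Set V,
        (G.deleteEdges {e : Sym2 V | ∃ s ∈ S, e = s(v, s)}).IsTdMod η Z ∧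
        Z.ncard ≤ k) := by
  classical
  set D : Set (Sym2 V) := {e : Sym2 V | ∃ s ∈ S, e = s(v, s)} with hDdef
  have hDmem : ∀ a b : V, s(a, b) ∈ D → (a = v ∧ b ∈ S) ∨ (b = v ∧ a ∈ S) := by
    rintro a b ⟨s, hs, heq⟩
    rw [Sym2.eq_iff] at heq
    rcases heq with ⟨rfl, rfl⟩ | ⟨rfl, rfl⟩
    · exact Or.inl ⟨rfl, hs⟩
    · exact Or.inr ⟨rfl, hs⟩
  have hDmem' : ∀ a b : V, a ∈ S → b ∈ S → s(a, b) ∉ D := by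
    intro a b ha hb hmem
    rcases hDmem a b hmem with ⟨rfl, _⟩ | ⟨rfl, _⟩ <;> exact hv ‹_›
  constructor
  · rintro ⟨Z, hZ, hZk⟩
    refine ⟨Z, ?_, hZk⟩
    unfold SimpleGraph.IsTdMod at hZ ⊢
    haveI : Fintype ↥(Zᶜ : Set V) := Fintype.ofFinite _
    refine le_trans (SimpleGraph.treedepth_mono ?_) hZ
    intro a b hab
    simp only [SimpleGraph.comap_adj, Function.Embedding.coe_subtype,
      SimpleGraph.deleteEdges_adj] at hab ⊢
    exact hab.1
  · rintro ⟨Z', hZ', hZ'k⟩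
    obtain ⟨Z, hZmod, hZmin, hZX⟩ := h3 D le_rfl
    have hZk : Z.ncard ≤ k := le_trans (hZmin Z' hZ') hZ'k
    by_cases hvZ : v ∈ Z
    · refine ⟨Z, ?_, hZk⟩
      unfold SimpleGraph.IsTdMod at hZmod ⊢
      have hEq : (G.induce (Zᶜ : Set V)) = ((G.deleteEdges D).induce (Zᶜ : Set V)) := by
        ext a b
        simp only [SimpleGraph.comap_adj, Function.Embedding.coe_subtype,
          SimpleGraph.deleteEdges_adj]
        refine ⟨fun h => ⟨h, fun hmem => ?_⟩, fun h => h.1⟩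
        rcases hDmem _ _ hmem with ⟨ha, _⟩ | ⟨hb, _⟩
        · exact a.2 (ha ▸ hvZ)
        · exact b.2 (hb ▸ hvZ)
      rw [hEq]
      exact hZmod
    · -- main case : v ∉ Z
      refine ⟨Z, ?_, hZk⟩
      have hvZc : v ∈ (Zᶜ : Set V) := hvZ
      haveI : Fintype ↥(Zᶜ : Set V) := Fintype.ofFinite _
      set W := ↥(Zᶜ : Set V) with hWdef
      set H : SimpleGraph W := G.induce (Zᶜ : Set V) with hHdef
      set H' : SimpleGraph W := (G.deleteEdges D).induce (Zᶜ : Set V) with hH'def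
      have hH'adj : ∀ a b : W, H'.Adj a b ↔ (G.Adj ↑a ↑b ∧ s((↑a : V), (↑b : V)) ∉ D) := by
        intro a b
        rw [hH'def]
        simp [SimpleGraph.deleteEdges_adj]
      have hHadj : ∀ a b : W, H.Adj a b ↔ G.Adj ↑a ↑b := by
        intro a b
        rw [hHdef]
        simp
      set v' : W := ⟨v, hvZc⟩ with hv'def
      have htd : H'.treedepth ≤ η := hZmod
      obtain ⟨F, hF, hFh⟩ := H'.exists_optimal_decomp
      have hFheight : F.height ≤ η := le_of_eq_of_le hFh htd
      -- the apex structure for untouched X i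
      have key : ∀ i : Fin (ℓ + η),
          ∃ m : W, ¬(X i ∩ Z).Nonempty →
            (↑m ∈ X i ∧ (∀ x : W, ↑x ∈ X i → F.Anc x m) ∧ F.AncDesc v' m) := by
        intro i
        by_cases hi : (X i ∩ Z).Nonempty
        · exact ⟨v', fun h => absurd hi h⟩
        have hXZc : ∀ x ∈ X i, x ∈ (Zᶜ : Set V) := fun x hx hxZ => hi ⟨x, hx, hxZ⟩
        have hvX : v ∉ X i := (h1 i).2.1
        set U : Set W := {x : W | ↑x ∈ X i} with hUdef
        have hUadj : ∀ a b : ↥U, (H'.induce U).Adj a b ↔ G.Adj ↑↑a ↑↑b := by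
          intro a b
          have : (H'.induce U).Adj a b ↔ H'.Adj ↑a ↑b := Iff.rfl
          rw [this, hH'adj]
          refine ⟨fun h => h.1, fun h => ⟨h, fun hmem => ?_⟩⟩
          rcases hDmem _ _ hmem with ⟨ha, _⟩ | ⟨hb, _⟩
          · exact hvX (ha ▸ a.2)
          · exact hvX (hb ▸ b.2)
        have hc : (H'.induce U).Connected := by
          apply SimpleGraph.connected_transport
            (⟨fun x => ⟨⟨↑x, hXZc _ x.2⟩, x.2⟩, fun y => ⟨↑↑y, y.2⟩,
              fun x => rfl, fun y => rfl⟩ : ↥(X i) ≃ ↥U) _ (hconn i)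
          intro a a' ha
          rw [hUadj]
          exact show G.Adj (↑a : V) (↑a' : V) from ha
        obtain ⟨m0, hm0⟩ := F.exists_apex H' U hc (fun a b hab => hF ((hUadj a b).mp hab |> fun h => by
          rw [hH'adj]
          refine ⟨h, fun hmem => ?_⟩
          rcases hDmem _ _ hmem with ⟨ha, _⟩ | ⟨hb, _⟩
          · exact hvX (ha ▸ a.2 : v ∈ X i)
          · exact hvX (hb ▸ b.2 : v ∈ X i)))
        obtain ⟨x₀, hx₀X, hadj₀⟩ := (h1 i).2.2
        set x₀' : W := ⟨x₀, hXZc _ hx₀X⟩ with hx₀'def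
        have hH'₀ : H'.Adj v' x₀' := by
          rw [hH'adj]
          refine ⟨hadj₀, fun hmem => ?_⟩
          rcases hDmem _ _ hmem with ⟨_, hbS⟩ | ⟨hb, _⟩
          · exact Set.disjoint_left.mp (h2' i) hx₀X hbS
          · exact hvX (hb ▸ hx₀X)
        have hcomp : F.AncDesc v' x₀' := hF hH'₀
        have hx₀m : F.Anc x₀' ↑m0 := hm0 ⟨x₀', hx₀X⟩
        refine ⟨↑m0, fun _ => ⟨m0.2, fun x hx => hm0 ⟨x, hx⟩, ?_⟩⟩
        rcases hcomp with h | h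
        · exact Or.inl (h.trans hx₀m)
        · exact RootedForest.anc_comparable_s12 h hx₀m
      choose mfun hm using key
      -- counting
      set J : Finset (Fin (ℓ + η)) :=
        Finset.univ.filter (fun i => (X i ∩ Z).Nonempty) with hJdef
      have hJcard : J.card ≤ ℓ := by
        set zf : Fin (ℓ + η) → V := fun i =>
          if h : (X i ∩ Z).Nonempty then h.choose else v with hzf
        have hzmem : ∀ i ∈ J, zf i ∈ X i ∩ Z := by
          intro i hi
          have hi' : (X i ∩ Z).Nonempty := by
            simpa [hJdef] using hi
          simpa [hzf, hi'] using hi'.choose_spec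
        have hinj : Set.InjOn zf ↑J := by
          intro i hi j hj hij
          by_contra hne
          have h1' := hzmem i (by simpa using hi)
          have h2' := hzmem j (by simpa using hj)
          exact Set.disjoint_left.mp (h2 i j hne) h1'.1 (hij ▸ h2'.1)
        have hmaps : zf '' ↑J ⊆ Z ∩ ⋃ i : Fin (ℓ + η), X i := by
          rintro _ ⟨i, hi, rfl⟩
          have := hzmem i (by simpa using hi)
          exact ⟨this.2, Set.mem_iUnion.mpr ⟨i, this.1⟩⟩
        calc J.card = (zf '' ↑J).ncard := by
              rw [Set.ncard_image_of_injOn hinj, Set.ncard_coe_finset]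
          _ ≤ (Z ∩ ⋃ i : Fin (ℓ + η), X i).ncard :=
              Set.ncard_le_ncard hmaps (Set.toFinite _)
          _ ≤ ℓ := hZX
      set d : ℕ := F.depth v' with hddef
      have hd1 : 1 ≤ d := RootedForest.one_le_depth v'
      have hdη : d ≤ η := le_trans (RootedForest.depth_le_height_s12 v') hFheight
      obtain ⟨istar, hiJ, hinp⟩ : ∃ i : Fin (ℓ + η), ¬(X i ∩ Z).Nonempty ∧
          ¬ F.ProperAnc v' (mfun i) := by
        by_contra hcon
        push_neg at hcon
        set J1 : Finset (Fin (ℓ + η)) :=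
          Finset.univ.filter (fun i => ¬(X i ∩ Z).Nonempty) with hJ1def
        have hJ1sub : ∀ i ∈ J1, F.ProperAnc v' (mfun i) := by
          intro i hi
          exact hcon i (Set.not_nonempty_iff_eq_empty.mp (by simpa [hJ1def] using hi))
        have hJ1card : (ℓ + η) - J.card ≤ J1.card := by
          have : J1 = Jᶜ := by
            ext i
            simp [hJ1def, hJdef]
          rw [this, Finset.card_compl]
          simp
        -- map mfun into the proper ancestors of v'
        have hinj : Set.InjOn mfun ↑J1 := by
          intro i hi j hj hij
          by_contra hne
          have hi' : ¬(X i ∩ Z).Nonempty := by simpa [hJ1def] using hi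
          have hj' : ¬(X j ∩ Z).Nonempty := by simpa [hJ1def] using hj
          have h1' := (hm i hi').1
          have h2' := (hm j hj').1
          exact Set.disjoint_left.mp (h2 i j hne) h1' (by rw [hij]; exact h2')
        have hmaps : mfun '' ↑J1 ⊆ {u : W | F.ProperAnc v' u} := by
          rintro _ ⟨i, hi, rfl⟩
          exact hJ1sub i (by simpa using hi)
        have hPcard : {u : W | F.ProperAnc v' u}.ncard = d - 1 := by
          have hset : {u : W | F.ProperAnc v' u} = {u : W | F.Anc v' u} \ {v'} := by
            ext u
            simp only [Set.mem_setOf_eq, Set.mem_diff, Set.mem_singleton_iff]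
            constructor
            · intro h
              refine ⟨h.anc, fun hc => ?_⟩
              exact F.acyclic v' (hc ▸ h)
            · rintro ⟨h, hne⟩
              exact h.properAnc_of_ne (Ne.symm hne)
          rw [hset, Set.ncard_diff_singleton_of_mem
            (show v' ∈ {u : W | F.Anc v' u} from RootedForest.Anc.refl v')]
          rw [hddef, RootedForest.depth_eq_ncard]
        have hcard : J1.card ≤ d - 1 := by
          calc J1.card = (mfun '' ↑J1).ncard := by
                rw [Set.ncard_image_of_injOn hinj, Set.ncard_coe_finset]
            _ ≤ {u : W | F.ProperAnc v' u}.ncard :=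
                Set.ncard_le_ncard hmaps (Set.toFinite _)
            _ = d - 1 := hPcard
        omega
      -- treedepth of S is at most η - d
      set t : ℕ := (G.induce S).treedepth with htdef
      have htld : t + d ≤ η := by
        obtain ⟨hmX, hapex, hAD⟩ := hm istar hiJ
        set m := mfun istar with hmdef
        have hvX : v ∉ X istar := (h1 istar).2.1
        have hmne : m ≠ v' := by
          intro hc
          apply hvX
          have hcoe : (↑m : V) = v := by rw [hc]
          exact hcoe ▸ hmX
        have hanc : F.ProperAnc m v' := by
          rcases hAD with h | h
          · exact absurd (h.properAnc_of_ne (Ne.symm hmne)) hinp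
          · exact h.properAnc_of_ne hmne
        have hdm : d < F.depth m := RootedForest.depth_strict_mono hanc
        set U : Set W := {x : W | ↑x ∈ X istar} with hUdef
        have hsub : ∀ u ∈ U, F.Anc u m := fun u hu => hapex u hu
        have hmax : ∀ u ∈ U, F.Anc m u → u = m := fun u hu h =>
          RootedForest.anc_antisymm_s12 (hapex u hu) h
        have hrh : (F.restrict U).height ≤ η - d := by
          apply RootedForest.height_le
          intro a
          have hb1 := RootedForest.restrict_depth_subtree F U m hsub hmax a
          have hb2 : F.depth ↑a ≤ η := le_trans (RootedForest.depth_le_height_s12 _) hFheight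
          omega
        have hXZc : ∀ x ∈ X istar, x ∈ (Zᶜ : Set V) := fun x hx hxZ => hiJ ⟨x, hx, hxZ⟩
        have htX : (G.induce (X istar)).treedepth ≤ η - d := by
          haveI : Fintype ↥U := Fintype.ofFinite _
          refine le_trans (SimpleGraph.treedepth_le_equiv (H'.induce U) _
            (⟨fun x => ⟨↑↑x, x.2⟩, fun y => ⟨⟨↑y, hXZc _ y.2⟩, y.2⟩,
              fun x => rfl, fun y => rfl⟩ : ↥U ≃ ↥(X istar)) ?_) ?_
          · intro b b' hb
            show H'.Adj _ _
            rw [hH'adj]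
            refine ⟨hb, fun hmem => ?_⟩
            rcases hDmem _ _ hmem with ⟨ha, _⟩ | ⟨hb', _⟩
            · exact hvX (ha ▸ b.2)
            · exact hvX (hb' ▸ b'.2)
          · exact le_trans ((H'.induce U).treedepth_le_height _
              (RootedForest.restrict_decomp F U hF)) hrh
        have hfin : t ≤ η - d := le_trans (h1 istar).1 htX
        omega
      -- the set to re-hang
      set M' : Set W := {x : W | ↑x ∈ S ∧ ¬ F.AncDesc x v'} with hM'def
      have hv'M : v' ∉ M' := fun h => hv h.1
      -- decomposition of H.induce M' of height ≤ t
      obtain ⟨FM, hFM, hFMh⟩ : ∃ FM : RootedForest ↥M',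
          (H.induce M').IsTreedepthDecomp FM ∧ FM.height ≤ t := by
        obtain ⟨FS, hFS, hFSh⟩ := (G.induce S).exists_optimal_decomp
        set M'' : Set ↥S := {s : ↥S | ∃ x : W, (↑x : V) = ↑s ∧ x ∈ M'} with hM''def
        have hmem1 : ∀ s : ↥M'', (↑(↑s : ↥S) : V) ∈ (Zᶜ : Set V) := by
          rintro ⟨s, x, hxv, hxM⟩
          exact hxv ▸ x.2
        have hmem2 : ∀ s : ↥M'', (⟨↑(↑s : ↥S), hmem1 s⟩ : W) ∈ M' := by
          rintro ⟨s, hs⟩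
          obtain ⟨x, hxv, hxM⟩ := hs
          have hx : x = ⟨↑s, hxv ▸ x.2⟩ := Subtype.ext hxv
          exact hx ▸ hxM
        refine ⟨(FS.restrict M'').emap
          (⟨fun s => ⟨⟨↑(↑s : ↥S), hmem1 s⟩, hmem2 s⟩,
            fun x => ⟨⟨↑(↑x : W), x.2.1⟩, ⟨↑x, rfl, x.2⟩⟩,
            fun s => Subtype.ext (Subtype.ext rfl),
            fun x => Subtype.ext (Subtype.ext rfl)⟩ : ↥M'' ≃ ↥M'), ?_, ?_⟩
        · refine RootedForest.emap_decomp _ _ ?_ (RootedForest.restrict_decomp FS M'' hFS)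
          intro b b' hb
          exact show G.Adj (↑(↑b : W) : V) ↑(↑b' : W) from hb
        · rw [RootedForest.emap_height]
          calc (FS.restrict M'').height ≤ FS.height := RootedForest.restrict_height_le FS M''
            _ = t := hFSh
      -- combine
      set Fc := F.combine M' v' hv'M FM with hFcdef
      have hFcdec : H.IsTreedepthDecomp Fc := by
        apply RootedForest.combine_decomp _ _ hFM
        · -- hyp1
          intro a b haM hbM hab
          rw [hHadj] at hab
          by_cases hD : s((↑a : V), (↑b : V)) ∈ D
          · rcases hDmem _ _ hD with ⟨hav, hbS⟩ | ⟨hbv, haS⟩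
            · have ha' : a = v' := Subtype.ext hav
              have hbAD : F.AncDesc b v' := by
                by_contra hc
                exact hbM ⟨hbS, hc⟩
              rw [ha']
              exact hbAD.symm'
            · have hb' : b = v' := Subtype.ext hbv
              have haAD : F.AncDesc a v' := by
                by_contra hc
                exact haM ⟨haS, hc⟩
              rw [hb']
              exact haAD
          · exact hF (by rw [hH'adj]; exact ⟨hab, hD⟩)
        · -- hyp2
          intro a haM b hbM hab
          rw [hHadj] at hab
          obtain ⟨haS, hnc⟩ := haM
          by_cases hD : s((↑a : V), (↑b : V)) ∈ D
          · rcases hDmem _ _ hD with ⟨hav, _⟩ | ⟨hbv, _⟩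
            · exact absurd (hav ▸ haS) hv
            · exact Or.inl (Subtype.ext hbv)
          · have hH'ab : H'.Adj a b := by rw [hH'adj]; exact ⟨hab, hD⟩
            have hcab : F.AncDesc a b := hF hH'ab
            have hbne : b ≠ v' := by
              rintro rfl
              exact hnc hcab
            have hbv' : F.AncDesc b v' := by
              by_cases hbS : (↑b : V) ∈ S
              · by_contra hc
                exact hbM ⟨hbS, hc⟩
              · have hbn : (↑b : V) ∈ G.nbhdSet S := ⟨hbS, ↑a, haS, hab.symm⟩
                rcases hN hbn with hbv | hbadj
                · exact absurd (⟨↑a, haS, by rw [hbv]; exact Sym2.eq_swap⟩ :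
                    s((↑a : V), (↑b : V)) ∈ D) hD
                · have hvb : H'.Adj v' b := by
                    rw [hH'adj]
                    refine ⟨hbadj, fun hmem => ?_⟩
                    rcases hDmem _ _ hmem with ⟨_, hbS'⟩ | ⟨_, hvS⟩
                    · exact hbS hbS'
                    · exact hv hvS
                  exact (hF hvb).symm'
            rcases hbv' with h | h
            · exfalso
              rcases hcab with h' | h'
              · exact hnc (Or.inl (h'.trans h))
              · exact hnc (RootedForest.anc_comparable_s12 h' h)
            · exact Or.inr (h.properAnc_of_ne (Ne.symm hbne))
      have hFcheight : Fc.height ≤ η := by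
        apply RootedForest.height_le
        intro x
        by_cases hx : x ∈ M'
        · calc Fc.depth x ≤ FM.depth ⟨x, hx⟩ + F.depth v' :=
              RootedForest.combine_depth_mem hx
          _ ≤ t + d := by
              have := RootedForest.depth_le_height_s12 (F := FM) ⟨x, hx⟩
              omega
          _ ≤ η := htld
        · calc Fc.depth x ≤ F.depth x := RootedForest.combine_depth_out hx
          _ ≤ η := le_trans (RootedForest.depth_le_height_s12 x) hFheight
      exact le_trans (H.treedepth_le_height Fc hFcdec) hFcheight
end
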